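/- arXiv:1401.2576 — 3 statements merged into one kernel-verified Lean document; each statement's English description precedes it below -/
import Mathlib

section
/- For any closed subset M₀ of a smooth manifold M there exists a smooth nonnegative function φ : M → ℝ whose zero set is exactly M₀ (a weak test function for M₀). -/
open scoped Manifold

/-- For any closed subset `M₀` of a smooth manifold `M` there is a
smooth nonnegative function `φ : M → ℝ` whose zero set is exactly `M₀`
(a weak test function for `M₀`). -/
theorem stmt_3 {E : Type*} [NormedAddCommGroup E] [NormedSpace ℝ E]
    [FiniteDimensional ℝ E]
    {H : Type*} [TopologicalSpace H] (I : ModelWithCorners ℝ E H)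
    {M : Type*} [TopologicalSpace M] [ChartedSpace H M]
    [IsManifold I (⊤ : ℕ∞) M] [T2Space M] [SecondCountableTopology M]
    (M₀ : Set M) (hM₀ : IsClosed M₀) :
    ∃ φ : M → ℝ, ContMDiff I 𝓘(ℝ, ℝ) (⊤ : ℕ∞) φ ∧
      (∀ x, 0 ≤ φ x) ∧ φ ⁻¹' {0} = M₀ := by
  have : LocallyCompactSpace M := Manifold.locallyCompact_of_finiteDimensional I
  have : SigmaCompactSpace M := inferInstance
  obtain ⟨f, f_diff, f_range, hf0, -⟩ :=
    exists_contMDiff_zero_iff_one_iff_of_isClosed I hM₀ isClosed_empty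
      (Set.disjoint_empty M₀)
  refine ⟨f, f_diff, fun x => (f_range (Set.mem_range_self x)).1, ?_⟩
  ext x
  simp [← hf0 x]
end

section
/- For any closed subset M₀ of a smooth manifold M there exists a smooth function φ : M → [0,1] whose zero set is exactly M₀ and such that the differential of φ vanishes at every point of M₀ (a strong test function for M₀). -/
open scoped Manifold

/-- For any closed subset `M₀` of a smooth manifold `M` there is a
smooth function `φ : M → [0,1]` whose zero set is exactly `M₀` and whose
differential vanishes at every point of `M₀` (a strong test function for `M₀`). -/
theorem stmt_4 {E : Type*} [NormedAddCommGroup E] [NormedSpace ℝ E]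
    [FiniteDimensional ℝ E]
    {H : Type*} [TopologicalSpace H] (I : ModelWithCorners ℝ E H)
    {M : Type*} [TopologicalSpace M] [ChartedSpace H M]
    [IsManifold I (⊤ : ℕ∞) M] [T2Space M] [SecondCountableTopology M]
    (M₀ : Set M) (hM₀ : IsClosed M₀) :
    ∃ φ : M → ℝ, ContMDiff I 𝓘(ℝ, ℝ) (⊤ : ℕ∞) φ ∧
      (∀ x, φ x ∈ Set.Icc (0 : ℝ) 1) ∧ φ ⁻¹' {0} = M₀ ∧
      ∀ x ∈ M₀, mfderiv I 𝓘(ℝ, ℝ) φ x = 0 := by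
  have : LocallyCompactSpace M := Manifold.locallyCompact_of_finiteDimensional I
  obtain ⟨f, hf, hrange, hzero, -⟩ :=
    exists_contMDiff_zero_iff_one_iff_of_isClosed I (n := (⊤ : ℕ∞)) hM₀ isClosed_empty
      (Set.disjoint_empty M₀)
  refine ⟨f * f, hf.mul hf, ?_, ?_, ?_⟩
  · intro x
    have h := hrange (Set.mem_range_self x)
    exact ⟨mul_nonneg h.1 h.1, mul_le_one₀ h.2 h.1 h.2⟩
  · ext x
    simp [mul_self_eq_zero, ← hzero x]
  · intro x hx
    have hfx : f x = 0 := (hzero x).1 hx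
    have hd := ((hf x).mdifferentiableAt (by simp)).hasMFDerivAt.mul'
        ((hf x).mdifferentiableAt (by simp)).hasMFDerivAt
    rw [hd.mfderiv, hfx]
    show _ = (0 : E →L[ℝ] ℝ)
    have key : ∀ L : E →L[ℝ] ℝ, (0:ℝ) • L + MulOpposite.op (0:ℝ) • L = 0 := fun L => by simp
    exact key _
end

section
/- For a smooth function f on a manifold M, the operator d_f : Ω^p(M) → Ω^{p+1}(M) defined by d_f ω = f dω − p df ∧ ω satisfies d_f ∘ d_f = 0. -/
/-- For a smooth function `f` (degree-0 form), the twisted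
differential `d_f ω = f dω − p df ∧ ω` on `p`-forms satisfies `d_f ∘ d_f = 0`.
Here the inner `d_f` acts on the `p`-form `ω` and the outer one on the
resulting `(p+1)`-form. -/
theorem stmt_12 {A : Type*} [Ring A] [Algebra ℝ A]
    (𝒜 : ℕ → Submodule ℝ A) (d : A →ₗ[ℝ] A)
    -- `d` raises degree by one
    (hd : ∀ p : ℕ, ∀ a ∈ 𝒜 p, d a ∈ 𝒜 (p + 1))
    -- `d ∘ d = 0`
    (hdd : ∀ a : A, d (d a) = 0)
    -- graded Leibniz rule
    (hleib : ∀ (p : ℕ) (a b : A), a ∈ 𝒜 p →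
      d (a * b) = d a * b + ((-1 : ℝ) ^ p) • (a * d b))
    -- graded commutativity
    (hcomm : ∀ (p q : ℕ) (a b : A), a ∈ 𝒜 p → b ∈ 𝒜 q →
      a * b = ((-1 : ℝ) ^ (p * q)) • (b * a))
    (p : ℕ) (f ω : A) (hf : f ∈ 𝒜 0) (hω : ω ∈ 𝒜 p) :
    f * d (f * d ω - (p : ℝ) • (d f * ω)) -
      ((p + 1 : ℕ) : ℝ) • (d f * (f * d ω - (p : ℝ) • (d f * ω))) = 0 := by
  have hdf : d f ∈ 𝒜 1 := hd 0 f hf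
  have hsq : d f * d f = 0 := by
    have h := hcomm 1 1 (d f) (d f) hdf hdf
    simp only [mul_one, pow_one, neg_smul, one_smul] at h
    have h2 : (2 : ℝ) • (d f * d f) = 0 := by
      rw [two_smul]
      nth_rewrite 1 [h]
      exact neg_add_cancel _
    exact (smul_eq_zero.mp h2).resolve_left (by norm_num)
  have h1 : d (f * d ω) = d f * d ω := by
    simp [hleib 0 f (d ω) hf, hdd ω]
  have h2 : d (d f * ω) = -(d f * d ω) := by
    rw [hleib 1 (d f) ω hdf, hdd f, zero_mul, pow_one, neg_smul, one_smul, zero_add]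
  have hc : d f * f = f * d f := by
    have h := hcomm 1 0 (d f) f hdf hf
    simpa using h
  have hswap : d f * (f * d ω) = f * (d f * d ω) := by
    rw [← mul_assoc, hc, mul_assoc]
  have hz : d f * (d f * ω) = 0 := by rw [← mul_assoc, hsq, zero_mul]
  simp only [map_sub, map_smul, h1, h2, mul_sub, mul_smul_comm, smul_sub, hswap, hz,
    smul_zero, mul_neg, smul_neg, sub_zero]
  push_cast
  module
end
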